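/- For 1 < p < ∞, the absolutely convex closed hull of a relatively p-compact subset K of a Banach space is relatively p-compact, and m_{K_p}(closed absolutely convex hull of K) = m_{K_p}(K). -/

import Mathlib

open scoped BigOperators Classical

noncomputable section

variable {E : Type*} [NormedAddCommGroup E] [NormedSpace ℂ E]

/-- Coefficient sequences: the closed unit ball of `ℓ_{p*}` (where `p* = p/(p-1)`)
for `p > 1`, and the closed unit ball of `c₀` for `p = 1`. -/
def CoefBall (p : ℝ) (a : ℕ → ℂ) : Prop :=
  if p = 1 then
    Filter.Tendsto (fun n => ‖a n‖) Filter.atTop (nhds 0) ∧ ∀ n, ‖a n‖ ≤ 1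
  else
    ∀ s : Finset ℕ, ∑ n ∈ s, ‖a n‖ ^ (p / (p - 1)) ≤ 1

/-- The `p`-convex hull of a sequence `(x_n)`: all convergent sums `∑ a_n x_n`
with `(a_n)` in the appropriate coefficient ball. -/
def pConv (p : ℝ) (x : ℕ → E) : Set E :=
  {y | ∃ a : ℕ → ℂ, CoefBall p a ∧ HasSum (fun n => a n • x n) y}

/-- A set is relatively `p`-compact if it is contained in the `p`-convex hull of
some `p`-summable sequence. -/
def RelPCompact (p : ℝ) (K : Set E) : Prop :=
  ∃ x : ℕ → E, Summable (fun n => ‖x n‖ ^ p) ∧ K ⊆ pConv p x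

/-- The measure of `p`-compactness of a set `K`. -/
def mKp (p : ℝ) (K : Set E) : ℝ :=
  sInf {r : ℝ | ∃ x : ℕ → E, Summable (fun n => ‖x n‖ ^ p) ∧ K ⊆ pConv p x ∧
    (∑' n, ‖x n‖ ^ p) ^ (1 / p) = r}

end

/-- The absolutely convex hull of a set: finite combinations `∑ c_i • k_i` with
`k_i ∈ K` and `∑ ‖c_i‖ ≤ 1`. -/
def absConvHull {E : Type*} [NormedAddCommGroup E] [NormedSpace ℂ E] (K : Set E) : Set E :=
  {y | ∃ (s : Finset ℕ) (c : ℕ → ℂ) (k : ℕ → E),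
    (∀ n ∈ s, k n ∈ K) ∧ (∑ n ∈ s, ‖c n‖) ≤ 1 ∧ y = ∑ n ∈ s, c n • k n}

section Aux

open Filter

variable {E : Type*} [NormedAddCommGroup E] [NormedSpace ℂ E] {p : ℝ}

private lemma coefBall_iff (hp : 1 < p) {a : ℕ → ℂ} :
    CoefBall p a ↔ ∀ s : Finset ℕ, ∑ n ∈ s, ‖a n‖ ^ (p / (p - 1)) ≤ 1 := by
  unfold CoefBall
  rw [if_neg hp.ne']

private lemma holder_finset (hp : 1 < p) {a : ℕ → ℂ} (ha : CoefBall p a) (x : ℕ → E)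
    (s : Finset ℕ) : ∑ n ∈ s, ‖a n‖ * ‖x n‖ ≤ (∑ n ∈ s, ‖x n‖ ^ p) ^ (1 / p) := by
  have hpq : (p / (p - 1)).HolderConjugate p := (Real.HolderConjugate.conjExponent hp).symm
  have h := Real.inner_le_Lp_mul_Lq_of_nonneg s (f := fun n => ‖a n‖) (g := fun n => ‖x n‖)
      hpq (fun _ _ => norm_nonneg _) (fun _ _ => norm_nonneg _)
  refine h.trans ?_
  have h1 : (∑ n ∈ s, ‖a n‖ ^ (p / (p - 1))) ^ (1 / (p / (p - 1))) ≤ 1 :=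
    Real.rpow_le_one (Finset.sum_nonneg fun _ _ => Real.rpow_nonneg (norm_nonneg _) _)
      ((coefBall_iff hp).mp ha s) hpq.one_div_nonneg
  exact mul_le_of_le_one_left (Real.rpow_nonneg
    (Finset.sum_nonneg fun _ _ => Real.rpow_nonneg (norm_nonneg _) _) _) h1

private lemma partial_rpow_le {x : ℕ → E} (hp : 1 < p)
    (hx : Summable fun n => ‖x n‖ ^ p) (s : Finset ℕ) :
    (∑ n ∈ s, ‖x n‖ ^ p) ^ (1 / p) ≤ (∑' n, ‖x n‖ ^ p) ^ (1 / p) :=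
  Real.rpow_le_rpow (Finset.sum_nonneg fun _ _ => Real.rpow_nonneg (norm_nonneg _) _)
    (Summable.sum_le_tsum s (fun _ _ => Real.rpow_nonneg (norm_nonneg _) _) hx)
    (one_div_nonneg.mpr (by linarith))

private lemma summable_norm_mul (hp : 1 < p) {a : ℕ → ℂ} (ha : CoefBall p a) {x : ℕ → E}
    (hx : Summable fun n => ‖x n‖ ^ p) :
    Summable (fun n => ‖a n‖ * ‖x n‖) :=
  summable_of_sum_le (fun _ => mul_nonneg (norm_nonneg _) (norm_nonneg _))
    (fun u => (holder_finset hp ha x u).trans (partial_rpow_le hp hx u))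

private lemma tsum_norm_mul_le (hp : 1 < p) {a : ℕ → ℂ} (ha : CoefBall p a) {x : ℕ → E}
    (hx : Summable fun n => ‖x n‖ ^ p) :
    ∑' n, ‖a n‖ * ‖x n‖ ≤ (∑' n, ‖x n‖ ^ p) ^ (1 / p) :=
  Summable.tsum_le_of_sum_le (summable_norm_mul hp ha hx)
    (fun s => (holder_finset hp ha x s).trans (partial_rpow_le hp hx s))

private lemma summable_smul_of_coefBall [CompleteSpace E] (hp : 1 < p) {a : ℕ → ℂ}
    (ha : CoefBall p a) {x : ℕ → E} (hx : Summable fun n => ‖x n‖ ^ p) :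
    Summable (fun n => a n • x n) := by
  apply Summable.of_norm
  simpa [norm_smul] using summable_norm_mul hp ha hx

private lemma coefBall_shift (hp : 1 < p) {a : ℕ → ℂ} (ha : CoefBall p a) (N : ℕ) :
    CoefBall p (fun n => a (n + N)) := by
  rw [coefBall_iff hp] at ha ⊢
  intro s
  have h := ha (s.image (· + N))
  rwa [Finset.sum_image (by intro u _ v _ h; simp only at h; omega)] at h

private lemma pConv_isClosed [CompleteSpace E] (hp : 1 < p) {x : ℕ → E}
    (hx : Summable fun n => ‖x n‖ ^ p) : IsClosed (pConv p x) := by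
  have hpq : p.HolderConjugate (p / (p - 1)) := Real.HolderConjugate.conjExponent hp
  have hq1 : 1 < p / (p - 1) := hpq.symm.lt
  have hq0 : 0 < p / (p - 1) := lt_trans one_pos hq1
  set B : Set (ℕ → ℂ) := {a | CoefBall p a} with hB
  have hB_closed : IsClosed B := by
    have hBeq : B = ⋂ s : Finset ℕ, {a : ℕ → ℂ | ∑ n ∈ s, ‖a n‖ ^ (p / (p - 1)) ≤ 1} := by
      ext a
      simp [hB, coefBall_iff hp, Set.mem_iInter]
    rw [hBeq]
    refine isClosed_iInter fun s => isClosed_le ?_ continuous_const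
    exact continuous_finset_sum _ fun n _ =>
      ((continuous_apply n).norm).rpow_const (fun a => Or.inr hq0.le)
  have hB_sub : B ⊆ Set.pi Set.univ (fun _ : ℕ => Metric.closedBall (0 : ℂ) 1) := by
    intro a ha n _
    simp only [Metric.mem_closedBall, dist_zero_right]
    have h1 : ‖a n‖ ^ (p / (p - 1)) ≤ 1 := by
      have h := (coefBall_iff hp).mp ha {n}
      simpa using h
    by_contra h
    push_neg at h
    have h2 : (1 : ℝ) < ‖a n‖ ^ (p / (p - 1)) :=
      (Real.one_lt_rpow_iff_of_pos (lt_trans one_pos h)).mpr (Or.inl ⟨h, hq0⟩)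
    linarith
  have hB_cpt : IsCompact B :=
    (isCompact_univ_pi fun _ => isCompact_closedBall (0 : ℂ) 1).of_isClosed_subset
      hB_closed hB_sub
  have himg : pConv p x = (fun a : ℕ → ℂ => ∑' n, a n • x n) '' B := by
    ext y
    constructor
    · rintro ⟨a, ha, hsum⟩
      exact ⟨a, ha, hsum.tsum_eq⟩
    · rintro ⟨a, ha, rfl⟩
      exact ⟨a, ha, (summable_smul_of_coefBall hp ha hx).hasSum⟩
  have hcont : ContinuousOn (fun a : ℕ → ℂ => ∑' n, a n • x n) B := by
    have huc : TendstoUniformlyOn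
        (fun (N : ℕ) (a : ℕ → ℂ) => ∑ n ∈ Finset.range N, a n • x n)
        (fun a : ℕ → ℂ => ∑' n, a n • x n) atTop B := by
      rw [Metric.tendstoUniformlyOn_iff]
      intro ε hε
      have h1 : Tendsto (fun N => ∑' k, ‖x (k + N)‖ ^ p) atTop (nhds 0) :=
        tendsto_sum_nat_add (fun n => ‖x n‖ ^ p)
      have htail : Tendsto (fun N => (∑' k, ‖x (k + N)‖ ^ p) ^ (1 / p)) atTop (nhds 0) := by
        have hc := (Real.continuousAt_rpow_const 0 (1 / p)
          (Or.inr (one_div_nonneg.mpr (by linarith)))).tendsto.comp h1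
        simpa [Function.comp_def, one_div,
          Real.zero_rpow (inv_ne_zero (show p ≠ 0 by linarith))] using hc
      filter_upwards [htail.eventually (gt_mem_nhds hε)] with N hN a haB
      have ha : CoefBall p a := haB
      rw [dist_eq_norm]
      have hsmm : Summable (fun n => a n • x n) := summable_smul_of_coefBall hp ha hx
      have heq : (∑' n, a n • x n) - ∑ n ∈ Finset.range N, a n • x n
          = ∑' k, a (k + N) • x (k + N) := by
        have h2 := Summable.sum_add_tsum_nat_add (f := fun n => a n • x n) N hsmm
        rw [← h2, add_sub_cancel_left]
      rw [heq]
      have hxN : Summable (fun k => ‖x (k + N)‖ ^ p) :=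
        (summable_nat_add_iff (f := fun n => ‖x n‖ ^ p) N).mpr hx
      have haN : CoefBall p (fun k => a (k + N)) := coefBall_shift hp ha N
      have hn1 : Summable (fun k => ‖a (k + N)‖ * ‖x (k + N)‖) :=
        summable_norm_mul hp haN hxN
      have hn2 : Summable (fun k => ‖a (k + N) • x (k + N)‖) := by
        simpa [norm_smul] using hn1
      calc ‖∑' k, a (k + N) • x (k + N)‖ ≤ ∑' k, ‖a (k + N) • x (k + N)‖ :=
            norm_tsum_le_tsum_norm hn2
        _ = ∑' k, ‖a (k + N)‖ * ‖x (k + N)‖ := by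
            exact tsum_congr fun k => norm_smul _ _
        _ ≤ (∑' k, ‖x (k + N)‖ ^ p) ^ (1 / p) := tsum_norm_mul_le hp haN hxN
        _ < ε := hN
    exact huc.continuousOn (Frequently.of_forall fun N =>
      (continuous_finset_sum _ fun n _ =>
        ((continuous_apply n).smul continuous_const)).continuousOn)
  rw [himg]
  exact (hB_cpt.image_of_continuousOn hcont).isClosed

private lemma Lp_sum_sum_le {ι : Type*} (s : Finset ι) (t : Finset ℕ) (f : ι → ℕ → ℝ)
    (hf : ∀ i m, 0 ≤ f i m) {q : ℝ} (hq : 1 ≤ q) :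
    (∑ m ∈ t, (∑ i ∈ s, f i m) ^ q) ^ (1 / q) ≤ ∑ i ∈ s, (∑ m ∈ t, f i m ^ q) ^ (1 / q) := by
  classical
  induction s using Finset.induction with
  | empty =>
      simp [Real.zero_rpow (show q ≠ 0 by linarith),
        Real.zero_rpow (inv_ne_zero (show q ≠ 0 by linarith)),
        Real.zero_rpow (show (1 : ℝ) / q ≠ 0 by
          simp [ne_eq, div_eq_zero_iff]; linarith)]
  | @insert i s his ih =>
      simp only [Finset.sum_insert his]
      calc (∑ m ∈ t, (f i m + ∑ j ∈ s, f j m) ^ q) ^ (1 / q)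
          ≤ (∑ m ∈ t, f i m ^ q) ^ (1 / q) + (∑ m ∈ t, (∑ j ∈ s, f j m) ^ q) ^ (1 / q) :=
            Real.Lp_add_le_of_nonneg t hq (fun m _ => hf i m)
              (fun m _ => Finset.sum_nonneg fun j _ => hf j m)
        _ ≤ _ := add_le_add_right ih _

private lemma absConvHull_subset_pConv (hp : 1 < p) {x : ℕ → E} {K : Set E}
    (hK : K ⊆ pConv p x) : absConvHull K ⊆ pConv p x := by
  rintro y ⟨s, c, k, hk, hc, rfl⟩
  have hpq : p.HolderConjugate (p / (p - 1)) := Real.HolderConjugate.conjExponent hp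
  have hq1 : 1 < p / (p - 1) := hpq.symm.lt
  have hq0 : 0 < p / (p - 1) := lt_trans one_pos hq1
  set q : ℝ := p / (p - 1) with hqdef
  have hchoice : ∀ n ∈ s, ∃ a : ℕ → ℂ, CoefBall p a ∧ HasSum (fun m => a m • x m) (k n) :=
    fun n hn => hK (hk n hn)
  choose! a ha hsum using hchoice
  refine ⟨fun m => ∑ n ∈ s, c n * a n m, ?_, ?_⟩
  · rw [coefBall_iff hp]
    intro t
    have h1 : ∀ m, ‖∑ n ∈ s, c n * a n m‖ ≤ ∑ n ∈ s, ‖c n‖ * ‖a n m‖ := fun m =>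
      (norm_sum_le _ _).trans (le_of_eq (Finset.sum_congr rfl fun n _ => norm_mul _ _))
    have h2 : (∑ m ∈ t, ‖∑ n ∈ s, c n * a n m‖ ^ q) ^ (1 / q)
        ≤ (∑ m ∈ t, (∑ n ∈ s, ‖c n‖ * ‖a n m‖) ^ q) ^ (1 / q) := by
      apply Real.rpow_le_rpow
        (Finset.sum_nonneg fun _ _ => Real.rpow_nonneg (norm_nonneg _) _)
        (Finset.sum_le_sum fun m _ => Real.rpow_le_rpow (norm_nonneg _) (h1 m) hq0.le)
        (one_div_nonneg.mpr hq0.le)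
    have h3 : (∑ m ∈ t, (∑ n ∈ s, ‖c n‖ * ‖a n m‖) ^ q) ^ (1 / q)
        ≤ ∑ n ∈ s, (∑ m ∈ t, (‖c n‖ * ‖a n m‖) ^ q) ^ (1 / q) :=
      Lp_sum_sum_le s t (fun n m => ‖c n‖ * ‖a n m‖)
        (fun n m => mul_nonneg (norm_nonneg _) (norm_nonneg _)) hq1.le
    have h4 : ∀ n ∈ s, (∑ m ∈ t, (‖c n‖ * ‖a n m‖) ^ q) ^ (1 / q)
        ≤ ‖c n‖ := by
      intro n hn
      have he : ∀ m, (‖c n‖ * ‖a n m‖) ^ q = ‖c n‖ ^ q * ‖a n m‖ ^ q := fun m =>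
        Real.mul_rpow (norm_nonneg _) (norm_nonneg _)
      have hsum_eq : ∑ m ∈ t, (‖c n‖ * ‖a n m‖) ^ q = ‖c n‖ ^ q * ∑ m ∈ t, ‖a n m‖ ^ q := by
        simp only [he, Finset.mul_sum]
      rw [hsum_eq, Real.mul_rpow (Real.rpow_nonneg (norm_nonneg _) _)
        (Finset.sum_nonneg fun _ _ => Real.rpow_nonneg (norm_nonneg _) _)]
      have hcq : (‖c n‖ ^ q) ^ (1 / q) = ‖c n‖ := by
        rw [← Real.rpow_mul (norm_nonneg _), mul_one_div_cancel hq0.ne', Real.rpow_one]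
      rw [hcq]
      refine mul_le_of_le_one_right (norm_nonneg _) ?_
      exact Real.rpow_le_one
        (Finset.sum_nonneg fun _ _ => Real.rpow_nonneg (norm_nonneg _) _)
        ((coefBall_iff hp).mp (ha n hn) t) (one_div_nonneg.mpr hq0.le)
    have hL : (∑ m ∈ t, ‖∑ n ∈ s, c n * a n m‖ ^ q) ^ (1 / q) ≤ 1 :=
      h2.trans (h3.trans ((Finset.sum_le_sum h4).trans hc))
    by_contra hlt
    push_neg at hlt
    have hgt : (1 : ℝ) < (∑ m ∈ t, ‖∑ n ∈ s, c n * a n m‖ ^ q) ^ (1 / q) :=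
      (Real.one_lt_rpow_iff_of_pos (lt_trans one_pos hlt)).mpr
        (Or.inl ⟨hlt, one_div_pos.mpr hq0⟩)
    linarith
  · have hrw : (fun m => (∑ n ∈ s, c n * a n m) • x m)
        = fun m => ∑ n ∈ s, c n • a n m • x m := by
      funext m
      rw [Finset.sum_smul]
      exact Finset.sum_congr rfl fun n _ => by rw [mul_smul]
    rw [hrw]
    exact hasSum_sum fun n hn => (hsum n hn).const_smul (c n)

private lemma subset_absConvHull (K : Set E) : K ⊆ absConvHull K := by
  intro y hy
  exact ⟨{0}, fun _ => 1, fun _ => y, fun n _ => hy, by simp, by simp⟩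

end Aux

/-- For `1 < p < ∞`, the closed absolutely convex hull of a relatively
`p`-compact set is relatively `p`-compact with the same measure of
`p`-compactness. -/
theorem stmt6 {E : Type*} [NormedAddCommGroup E] [NormedSpace ℂ E] [CompleteSpace E]
    {p : ℝ} (hp : 1 < p) (K : Set E) (hK : RelPCompact p K) :
    RelPCompact p (closure (absConvHull K)) ∧
      mKp p (closure (absConvHull K)) = mKp p K := by
  obtain ⟨x, hx, hKx⟩ := hK
  have key : ∀ x' : ℕ → E, Summable (fun n => ‖x' n‖ ^ p) → K ⊆ pConv p x' →
      closure (absConvHull K) ⊆ pConv p x' := fun x' hx' hK' =>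
    (IsClosed.closure_subset_iff (pConv_isClosed hp hx')).mpr
      (absConvHull_subset_pConv hp hK')
  refine ⟨⟨x, hx, key x hx hKx⟩, ?_⟩
  unfold mKp
  congr 1
  ext r
  constructor
  · rintro ⟨x', hx', hsub, hr⟩
    exact ⟨x', hx', ((subset_absConvHull K).trans subset_closure).trans hsub, hr⟩
  · rintro ⟨x', hx', hsub, hr⟩
    exact ⟨x', hx', key x' hx' hsub, hr⟩
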